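/- The norm ‖x‖_1 = Σ_{n=1}^{∞} |x_n| on the real Banach space ℓ¹(ℕ) is Gâteaux-differentiable at a point x = (x_n)_{n≥1} ∈ ℓ¹(ℕ) if and only if x_n ≠ 0 for every n ≥ 1. -/

import Mathlib

open Filter Topology ENNReal

private lemma l1_norm (f : lp (fun _ : ℕ => ℝ) 1) : ‖f‖ = ∑' n, |f n| := by
  have := lp.norm_eq_tsum_rpow (p := 1) (by norm_num) f
  simpa [Real.norm_eq_abs] using this

private lemma sign_abs_le (y : ℝ) : |(SignType.sign y : ℝ)| ≤ 1 := by
  rcases SignType.sign y with _ | _ | _ <;> simp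

private lemma term_norm_le (y z : ℝ) : ‖(SignType.sign y : ℝ) * z‖ ≤ |z| := by
  rw [norm_mul, Real.norm_eq_abs, Real.norm_eq_abs]
  calc |(SignType.sign y : ℝ)| * |z| ≤ 1 * |z| :=
        mul_le_mul_of_nonneg_right (sign_abs_le y) (abs_nonneg _)
    _ = |z| := one_mul _

private lemma l1_summable (f : lp (fun _ : ℕ => ℝ) 1) : Summable fun n => |f n| := by
  have := (lp.memℓp f).summable (p := 1) (by norm_num)
  simpa [Real.norm_eq_abs] using this

/-- The norm `‖x‖₁ = ∑ |x_n|` of `ℓ¹(ℕ)` is Gâteaux-differentiable at `x` if and only if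
`x_n ≠ 0` for every `n`. -/
theorem statement11 (x : lp (fun _ : ℕ => ℝ) 1) :
    (∃ F : lp (fun _ : ℕ => ℝ) 1 →L[ℝ] ℝ,
      ∀ h : lp (fun _ : ℕ => ℝ) 1,
        Tendsto (fun t : ℝ => (‖x + t • h‖ - ‖x‖) / t) (𝓝[≠] (0 : ℝ)) (𝓝 (F h))) ↔
    ∀ n : ℕ, x n ≠ 0 := by
  constructor
  · rintro ⟨F, hF⟩ n
    by_contra hxn
    set h : lp (fun _ : ℕ => ℝ) 1 := lp.single 1 n 1 with hh
    have key : ∀ t : ℝ, ‖x + t • h‖ = ‖x‖ + |t| := by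
      intro t
      rw [l1_norm, l1_norm]
      have hcoord : ∀ m, |(x + t • h) m| = |x m| + (if m = n then |t| else 0) := by
        intro m
        have : (x + t • h) m = x m + t * h m := by
          simp [lp.coeFn_add, lp.coeFn_smul, Pi.add_apply, Pi.smul_apply, smul_eq_mul]; rfl
        rw [this]
        rcases eq_or_ne m n with rfl | hmn
        · simp [hh, lp.single_apply_self, hxn]
        · simp [hh, lp.single_apply_ne 1 n _ hmn, hmn]
      calc ∑' m, |(x + t • h) m| = ∑' m, (|x m| + (if m = n then |t| else 0)) := by
            exact tsum_congr hcoord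
        _ = (∑' m, |x m|) + ∑' m, (if m = n then |t| else 0) := by
            refine Summable.tsum_add (l1_summable x) ?_
            exact summable_of_ne_finset_zero (s := {n}) (by intro m hm; simp at hm; simp [hm])
        _ = (∑' m, |x m|) + |t| := by rw [tsum_ite_eq]
    have hq : ∀ t : ℝ, (‖x + t • h‖ - ‖x‖) / t = |t| / t := by
      intro t; rw [key]; ring_nf
    have h1 : Tendsto (fun t : ℝ => (‖x + t • h‖ - ‖x‖) / t) (𝓝[>] (0 : ℝ)) (𝓝 (F h)) :=
      (hF h).mono_left (nhdsWithin_mono _ (fun t ht => ne_of_gt ht))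
    have h2 : Tendsto (fun t : ℝ => (‖x + t • h‖ - ‖x‖) / t) (𝓝[<] (0 : ℝ)) (𝓝 (F h)) :=
      (hF h).mono_left (nhdsWithin_mono _ (fun t ht => ne_of_lt ht))
    have e1 : F h = 1 := by
      refine tendsto_nhds_unique h1 ?_
      refine Tendsto.congr' ?_ tendsto_const_nhds
      filter_upwards [self_mem_nhdsWithin] with t (ht : 0 < t)
      rw [hq, abs_of_pos ht, div_self ht.ne']
    have e2 : F h = -1 := by
      refine tendsto_nhds_unique h2 ?_
      refine Tendsto.congr' ?_ tendsto_const_nhds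
      filter_upwards [self_mem_nhdsWithin] with t (ht : t < 0)
      rw [hq, abs_of_neg ht, neg_div, div_self ht.ne]
    rw [e1] at e2; norm_num at e2
  · intro hx
    -- the candidate derivative
    have hsum : ∀ h : lp (fun _ : ℕ => ℝ) 1,
        Summable fun n => (SignType.sign (x n) : ℝ) * h n := by
      intro h
      exact Summable.of_norm_bounded (l1_summable h) (fun n => term_norm_le _ _)
    set F₀ : lp (fun _ : ℕ => ℝ) 1 →ₗ[ℝ] ℝ :=
      { toFun := fun h => ∑' n, (SignType.sign (x n) : ℝ) * h n
        map_add' := by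
          intro a b
          show (∑' n, (SignType.sign (x n) : ℝ) * (a + b) n)
              = (∑' n, (SignType.sign (x n) : ℝ) * a n)
                + ∑' n, (SignType.sign (x n) : ℝ) * b n
          have : ∀ n, (SignType.sign (x n) : ℝ) * (a + b) n
              = (SignType.sign (x n) : ℝ) * a n + (SignType.sign (x n) : ℝ) * b n := by
            intro n
            simp [lp.coeFn_add, Pi.add_apply, mul_add]
          rw [tsum_congr this, Summable.tsum_add (hsum a) (hsum b)]
        map_smul' := by
          intro c a
          show (∑' n, (SignType.sign (x n) : ℝ) * (c • a) n)
              = c • ∑' n, (SignType.sign (x n) : ℝ) * a n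
          have : ∀ n, (SignType.sign (x n) : ℝ) * (c • a) n
              = c * ((SignType.sign (x n) : ℝ) * a n) := by
            intro n
            simp [lp.coeFn_smul, Pi.smul_apply, smul_eq_mul]; ring
          rw [tsum_congr this, tsum_mul_left, smul_eq_mul] } with hF₀
    have hbound : ∀ h : lp (fun _ : ℕ => ℝ) 1, ‖F₀ h‖ ≤ 1 * ‖h‖ := by
      intro h
      rw [one_mul, l1_norm]
      calc ‖∑' n, (SignType.sign (x n) : ℝ) * h n‖
          ≤ ∑' n, ‖(SignType.sign (x n) : ℝ) * h n‖ := by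
            exact norm_tsum_le_tsum_norm (Summable.of_nonneg_of_le
              (fun n => norm_nonneg _) (fun n => term_norm_le _ _) (l1_summable h))
        _ ≤ ∑' n, |h n| := by
            exact Summable.tsum_le_tsum (fun n => term_norm_le _ _)
              (Summable.of_nonneg_of_le (fun n => norm_nonneg _)
                (fun n => term_norm_le _ _) (l1_summable h)) (l1_summable h)
    refine ⟨F₀.mkContinuous 1 hbound, fun h => ?_⟩
    have hFval : (F₀.mkContinuous 1 hbound) h = ∑' n, (SignType.sign (x n) : ℝ) * h n := rfl
    rw [hFval]
    -- rewrite the difference quotient as a tsum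
    have hquot : ∀ t : ℝ, (‖x + t • h‖ - ‖x‖) / t
        = ∑' n, (|x n + t * h n| - |x n|) / t := by
      intro t
      have h1 : ‖x + t • h‖ = ∑' n, |x n + t * h n| := by
        rw [l1_norm]
        refine tsum_congr fun n => ?_
        simp [lp.coeFn_add, lp.coeFn_smul, Pi.add_apply, Pi.smul_apply, smul_eq_mul]; rfl
      have hs1 : Summable fun n => |x n + t * h n| := by
        have := l1_summable (x + t • h)
        refine this.congr fun n => ?_
        simp [lp.coeFn_add, lp.coeFn_smul, Pi.add_apply, Pi.smul_apply, smul_eq_mul]; rfl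
      rw [h1, l1_norm, ← Summable.tsum_sub hs1 (l1_summable x), ← tsum_div_const]
    have := hquot
    refine Tendsto.congr (fun t => (hquot t).symm) ?_
    refine tendsto_tsum_of_dominated_convergence (l1_summable h) (fun n => ?_) ?_
    · -- pointwise convergence via differentiability of |·| at x n ≠ 0
      have hd : HasDerivAt (fun t : ℝ => |x n + t * h n|)
          ((SignType.sign (x n) : ℝ) * h n) 0 := by
        have hinner : HasDerivAt (fun t : ℝ => x n + t * h n) (h n) 0 := by
          simpa using ((hasDerivAt_id (0:ℝ)).mul_const (h n)).const_add (x n)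
        have habs : HasDerivAt (fun y : ℝ => |y|) ((SignType.sign (x n) : ℝ))
            (x n + 0 * h n) := by simpa using hasDerivAt_abs (hx n)
        exact habs.comp 0 hinner
      have := hasDerivAt_iff_tendsto_slope.mp hd
      refine this.congr fun t => ?_
      simp [slope_def_field]
    · filter_upwards [self_mem_nhdsWithin] with t (ht : t ∈ ({0}ᶜ : Set ℝ)) n
      have ht' : t ≠ 0 := ht
      rw [Real.norm_eq_abs, abs_div]
      rw [div_le_iff₀ (abs_pos.mpr ht')]
      calc |(|x n + t * h n| - |x n|)| ≤ |t * h n| := by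
            simpa using abs_abs_sub_abs_le_abs_sub (x n + t * h n) (x n)
        _ = |h n| * |t| := by rw [abs_mul]; ring
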